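/- If the parameters of the hyperchaotic Lü system u̇ = δu + xz, ẋ = α(y-x) + u, ẏ = γy - xz, ż = -βz + xy satisfy γ = -β = δ, then I1 = e^{-γt}(y + u) and I2 = e^{-2γt}(y² + z²) are time-dependent first integrals: dI1/dt = dI2/dt = 0 along every solution. -/

import Mathlib

open Real

/-- If the parameters of the hyperchaotic Lü system u̇ = δu + xz,
ẋ = α(y-x) + u, ẏ = γy - xz, ż = -βz + xy satisfy γ = -β = δ, then
I₁ = e^{-γt}(y + u) and I₂ = e^{-2γt}(y² + z²) are time-dependent first
integrals. -/
theorem lu_time_dependent_first_integrals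
    (α β γ δ : ℝ) (hβ : γ = -β) (hδ : γ = δ)
    (u x y z : ℝ → ℝ)
    (hu : ∀ t, HasDerivAt u (δ * u t + x t * z t) t)
    (hx : ∀ t, HasDerivAt x (α * (y t - x t) + u t) t)
    (hy : ∀ t, HasDerivAt y (γ * y t - x t * z t) t)
    (hz : ∀ t, HasDerivAt z (-β * z t + x t * y t) t) :
    (∀ t, HasDerivAt (fun t => exp (-γ * t) * (y t + u t)) 0 t) ∧
    (∀ t, HasDerivAt (fun t => exp (-2 * γ * t) * ((y t) ^ 2 + (z t) ^ 2)) 0 t) := by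
  constructor
  · intro t
    have he : HasDerivAt (fun t => exp (-γ * t)) (-γ * exp (-γ * t)) t := by
      simpa [mul_comm] using (HasDerivAt.exp ((hasDerivAt_id t).const_mul (-γ)))
    have h : HasDerivAt (fun t => exp (-γ * t) * (y t + u t)) _ t := he.mul ((hy t).add (hu t))
    convert h using 1
    subst hδ
    ring
  · intro t
    have he : HasDerivAt (fun t => exp (-2 * γ * t)) (-2 * γ * exp (-2 * γ * t)) t := by
      simpa [mul_comm] using (HasDerivAt.exp ((hasDerivAt_id t).const_mul (-2 * γ)))
    have h : HasDerivAt (fun t => exp (-2 * γ * t) * ((y t) ^ 2 + (z t) ^ 2)) _ t :=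
      he.mul (((hy t).pow 2).add ((hz t).pow 2))
    convert h using 1
    subst hβ
    norm_num [Pi.add_apply, Pi.pow_apply]
    ring
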